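/- Let F be a finite field, M = M₂(F), E = Fε + Fη ⊆ M a field extension of F of degree 2 (where ε is the identity and η has irreducible characteristic polynomial), and L = E·ε₁₁ = M·ε₁₁ where ε₁₁ is the matrix unit with 1 in position (1,1). Then for 0 ≠ c ∈ L and units a, b ∈ E^×, the equation a·c = c·b holds if and only if a = b and a is a scalar multiple of the identity (a ∈ (Fε)^×). -/

import Mathlib

open Polynomial

private lemma charpoly_fin_two' (F : Type*) [Field F] (η : Matrix (Fin 2) (Fin 2) F) :
    Matrix.charpoly η = X ^ 2 - C (η 0 0 + η 1 1) * X + C (η 0 0 * η 1 1 - η 0 1 * η 1 0) := by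
  rw [Matrix.charpoly, Matrix.det_fin_two, Matrix.charmatrix_apply_eq,
    Matrix.charmatrix_apply_eq, Matrix.charmatrix_apply_ne _ _ _ (by decide),
    Matrix.charmatrix_apply_ne _ _ _ (by decide), C_add, C_sub, C_mul, C_mul]
  ring

private lemma no_root' (F : Type*) [Field F] (η : Matrix (Fin 2) (Fin 2) F)
    (hη : Irreducible (Matrix.charpoly η)) (x : F) :
    x ^ 2 - (η 0 0 + η 1 1) * x + (η 0 0 * η 1 1 - η 0 1 * η 1 0) ≠ 0 := by
  intro h
  set t := η 0 0 + η 1 1 with ht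
  set d := η 0 0 * η 1 1 - η 0 1 * η 1 0 with hd0
  have hd : d = x * (t - x) := by linear_combination h
  have hfac : η.charpoly = (X - C x) * (X - C (t - x)) := by
    rw [charpoly_fin_two', ← ht, ← hd0, hd, C_mul,
      show C t = C x + C (t - x) by rw [← C_add]; ring_nf]
    ring
  rcases hη.isUnit_or_isUnit hfac with h' | h' <;>
    exact Polynomial.not_isUnit_X_sub_C _ h'

private lemma eta10_ne' (F : Type*) [Field F] (η : Matrix (Fin 2) (Fin 2) F)
    (hη : Irreducible (Matrix.charpoly η)) : η 1 0 ≠ 0 := by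
  intro h; apply no_root' F η hη (η 0 0); rw [h]; ring

private lemma eta01_ne' (F : Type*) [Field F] (η : Matrix (Fin 2) (Fin 2) F)
    (hη : Irreducible (Matrix.charpoly η)) : η 0 1 ≠ 0 := by
  intro h; apply no_root' F η hη (η 0 0); rw [h]; ring

/-- Let `F` be a finite field, `M = M₂(F)`, `E = Fε + Fη ⊆ M` a degree-2 field extension of
`F` (where `ε` is the identity and `η` has irreducible characteristic polynomial), and
`L = E·ε₁₁ = M·ε₁₁` with `ε₁₁ = [[1,0],[0,0]]`. Then for `0 ≠ c ∈ L` and units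
`a, b ∈ E^×`, one has `a·c = c·b` if and only if `a = b` and `a` is a nonzero scalar
multiple of the identity. -/
theorem commuting_units_are_central (F : Type*) [Field F] [Fintype F]
    (η : Matrix (Fin 2) (Fin 2) F) (hη : Irreducible (Matrix.charpoly η))
    (a b c : Matrix (Fin 2) (Fin 2) F)
    (ha : ∃ a₁ a₂ : F, a = a₁ • (1 : Matrix (Fin 2) (Fin 2) F) + a₂ • η) (ha0 : a ≠ 0)
    (hb : ∃ b₁ b₂ : F, b = b₁ • (1 : Matrix (Fin 2) (Fin 2) F) + b₂ • η) (hb0 : b ≠ 0)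
    (hc : ∃ c₁ c₂ : F,
      c = (c₁ • (1 : Matrix (Fin 2) (Fin 2) F) + c₂ • η) * !![1, 0; 0, 0]) (hc0 : c ≠ 0) :
    a * c = c * b ↔
      (a = b ∧ ∃ s : F, s ≠ 0 ∧ a = s • (1 : Matrix (Fin 2) (Fin 2) F)) := by
  obtain ⟨a₁, a₂, rfl⟩ := ha
  obtain ⟨b₁, b₂, rfl⟩ := hb
  obtain ⟨c₁, c₂, rfl⟩ := hc
  have hq := eta01_ne' F η hη
  have hr := eta10_ne' F η hη
  have hcuv : ¬(c₁ + c₂ * η 0 0 = 0 ∧ c₂ = 0) := by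
    rintro ⟨h1, h2⟩
    apply hc0
    have hc1 : c₁ = 0 := by simpa [h2] using h1
    rw [hc1, h2]
    simp
  have ha1ne : a₂ = 0 → a₁ ≠ 0 := by
    rintro h2 h1
    apply ha0
    rw [h1, h2]
    simp
  constructor
  · intro h
    have h00 := congrFun (congrFun h 0) 0
    have h01 := congrFun (congrFun h 0) 1
    have h10 := congrFun (congrFun h 1) 0
    have h11 := congrFun (congrFun h 1) 1
    simp [Matrix.mul_apply, Fin.sum_univ_two, Matrix.one_apply] at h00 h01 h10 h11
    have hb2 : b₂ = 0 := by
      rcases h01 with hu0 | hb2 | hq0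
      · rcases h11 with (hc20 | hr0) | hb2 | hq0
        · exact absurd ⟨hu0, hc20⟩ hcuv
        · exact absurd hr0 hr
        · exact hb2
        · exact absurd hq0 hq
      · exact hb2
      · exact absurd hq0 hq
    subst hb2
    have main : a₂ = 0 ∧ a₁ = b₁ := by
      by_cases hc2 : c₂ = 0
      · -- v = 0, u ≠ 0
        subst hc2
        have hu : c₁ ≠ 0 := by
          intro h'
          exact hcuv ⟨by rw [h']; ring, rfl⟩
        have ha2 : a₂ = 0 := by
          have h10' : a₂ * η 1 0 * c₁ = 0 := by linear_combination h10
          rcases mul_eq_zero.mp h10' with h' | h'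
          · rcases mul_eq_zero.mp h' with h'' | h''
            · exact h''
            · exact absurd h'' hr
          · exact absurd h' hu
        refine ⟨ha2, ?_⟩
        have h00' : (a₁ - b₁) * c₁ = 0 := by
          linear_combination h00 - (η 0 0 * (c₁ + 0 * η 0 0) + η 0 1 * (0 * η 1 0)) * ha2
        rcases mul_eq_zero.mp h00' with h' | h'
        · exact sub_eq_zero.mp h'
        · exact absurd h' hu
      · -- v ≠ 0
        have hv : c₂ * η 1 0 ≠ 0 := mul_ne_zero hc2 hr
        by_cases ha2 : a₂ = 0
        · refine ⟨ha2, ?_⟩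
          have h10' : (a₁ - b₁) * (c₂ * η 1 0) = 0 := by
            rw [ha2] at h10; linear_combination h10
          rcases mul_eq_zero.mp h10' with h' | h'
          · exact sub_eq_zero.mp h'
          · exact absurd h' hv
        · exfalso
          have eq1 : a₂ * η 0 1 * (c₂ * η 1 0)
              = ((b₁ - a₁) - a₂ * η 0 0) * (c₁ + c₂ * η 0 0) := by
            linear_combination h00
          have eq2 : a₂ * η 1 0 * (c₁ + c₂ * η 0 0)
              = ((b₁ - a₁) - a₂ * η 1 1) * (c₂ * η 1 0) := by
            linear_combination h10
          have hu : c₁ + c₂ * η 0 0 ≠ 0 := by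
            intro h'
            rw [h'] at eq1
            simp only [mul_zero, zero_mul] at eq1
            exact (mul_ne_zero (mul_ne_zero ha2 hq) hv) eq1
          have h3 : (((b₁ - a₁) - a₂ * η 0 0) * ((b₁ - a₁) - a₂ * η 1 1))
                * ((c₁ + c₂ * η 0 0) * (c₂ * η 1 0))
              = (a₂ ^ 2 * (η 0 1 * η 1 0)) * ((c₁ + c₂ * η 0 0) * (c₂ * η 1 0)) := by
            linear_combination (-(((b₁ - a₁) - a₂ * η 1 1) * (c₂ * η 1 0))) * eq1
              - a₂ * η 0 1 * (c₂ * η 1 0) * eq2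
          have key := mul_right_cancel₀ (mul_ne_zero hu hv) h3
          apply no_root' F η hη ((b₁ - a₁) / a₂)
          field_simp
          linear_combination key
    obtain ⟨ha2, hab⟩ := main
    refine ⟨by rw [ha2, hab], a₁, ha1ne ha2, by rw [ha2]; simp⟩
  · rintro ⟨hab, s, hs, hsa⟩
    rw [← hab, hsa, Matrix.smul_mul, Matrix.mul_smul, Matrix.one_mul, Matrix.mul_one]
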